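/- (Fisher's inequality, including degenerate designs): Let (V,𝒜) be a u-uniform regular hypergraph with v = |V| vertices and b = |𝒜| edges, u < v, such that every pair of distinct vertices lies in exactly λ edges for some fixed λ ≥ 0 (regularity assumed if λ = 0). Then b ≥ v. -/

import Mathlib

open Finset

private lemma sum_ite_count {α : Type*} (L : List α) (p : α → Prop) [DecidablePred p] :
    ∑ i : Fin L.length, (if p (L.get i) then (1:ℚ) else 0)
      = (L.countP (fun a => decide (p a)) : ℚ) := by
  induction L with
  | nil => simp
  | cons a l ih =>
    have h1 : ∑ i : Fin (a :: l).length, (if p ((a :: l).get i) then (1:ℚ) else 0)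
        = (if p a then (1:ℚ) else 0)
          + ∑ i : Fin l.length, (if p (l.get i) then (1:ℚ) else 0) :=
      Fin.sum_univ_succ _
    rw [h1, ih]
    have h2 : List.countP (fun a => decide (p a)) (a :: l)
        = List.countP (fun a => decide (p a)) l + (if p a then 1 else 0) := by
      rw [List.countP_cons]; by_cases h : p a <;> simp [h]
    rw [h2]
    push_cast
    ring

theorem fisher_inequality {V : Type*} [Fintype V] [DecidableEq V]
    (𝒜 : Multiset (Finset V)) (u r lam : ℕ)
    (huniform : ∀ A ∈ 𝒜, A.card = u) (hincomplete : u < Fintype.card V)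
    (hr : 1 ≤ r) (hreg : ∀ x : V, 𝒜.countP (fun A => x ∈ A) = r)
    (hpair : ∀ x y : V, x ≠ y → 𝒜.countP (fun A => x ∈ A ∧ y ∈ A) = lam) :
    Fintype.card V ≤ Multiset.card 𝒜 := by
  classical
  rcases Nat.eq_zero_or_pos (Fintype.card V) with hv0 | hv0
  · omega
  obtain ⟨x0⟩ := Fintype.card_pos_iff.mp hv0
  -- u ≥ 1
  have hu1 : 1 ≤ u := by
    by_contra h
    have hu0 : u = 0 := by omega
    have hpos : 0 < 𝒜.countP (fun A => x0 ∈ A) := by rw [hreg]; omega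
    obtain ⟨A, hA, hxA⟩ := Multiset.countP_pos.mp hpos
    have := huniform A hA
    rw [hu0, Finset.card_eq_zero] at this
    simp [this] at hxA
  set L := 𝒜.toList with hLdef
  have hL : (↑L : Multiset (Finset V)) = 𝒜 := Multiset.coe_toList 𝒜
  -- incidence vectors
  set N : V → Fin L.length → ℚ := fun x i => if x ∈ L.get i then 1 else 0 with hN
  -- Gram entries
  have hgram : ∀ x y : V, ∑ i, N x i * N y i
      = (𝒜.countP (fun A => x ∈ A ∧ y ∈ A) : ℚ) := by
    intro x y
    have hterm : ∀ i : Fin L.length, N x i * N y i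
        = if (x ∈ L.get i ∧ y ∈ L.get i) then (1:ℚ) else 0 := by
      intro i
      simp only [hN]
      by_cases hx : x ∈ L.get i
      · by_cases hy : y ∈ L.get i
        · rw [if_pos hx, if_pos hy, if_pos ⟨hx, hy⟩, one_mul]
        · rw [if_pos hx, if_neg hy, if_neg (fun h => hy h.2), one_mul]
      · rw [if_neg hx, if_neg (fun h : _ ∧ _ => hx h.1), zero_mul]
    rw [Finset.sum_congr rfl fun i _ => hterm i, sum_ite_count L (fun A => x ∈ A ∧ y ∈ A)]
    rw [← hL, Multiset.coe_countP]
  have hdiag : ∀ x : V, ∑ i, N x i * N x i = (r : ℚ) := by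
    intro x
    rw [hgram x x]
    norm_cast
    rw [← hreg x]
    exact Multiset.countP_congr rfl (fun A _ => by simp)
  have hoff : ∀ x y : V, x ≠ y → ∑ i, N x i * N y i = (lam : ℚ) := by
    intro x y hxy; rw [hgram x y, hpair x y hxy]
  have hrow : ∀ x : V, ∑ i, N x i = (r : ℚ) := by
    intro x
    have hterm : ∀ i : Fin L.length, N x i = N x i * N x i := by
      intro i
      simp only [hN]
      by_cases hx : x ∈ L.get i
      · rw [if_pos hx, mul_one]
      · rw [if_neg hx, mul_zero]
    rw [Finset.sum_congr rfl fun i _ => hterm i, hdiag x]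
  -- double counting: (v-1) * lam = (u-1) * r
  have hcount : ((Fintype.card V : ℚ) - 1) * lam = ((u : ℚ) - 1) * r := by
    have h1 : ∑ y ∈ univ.erase x0, ∑ i, N x0 i * N y i
        = ((Fintype.card V : ℚ) - 1) * lam := by
      rw [Finset.sum_congr rfl fun y hy => hoff x0 y (Ne.symm (Finset.ne_of_mem_erase hy))]
      rw [Finset.sum_const, Finset.card_erase_of_mem (mem_univ x0), Finset.card_univ,
        nsmul_eq_mul, Nat.cast_sub hv0, Nat.cast_one]
    rw [← h1, Finset.sum_comm]
    have h2 : ∀ i : Fin L.length, ∑ y ∈ univ.erase x0, N x0 i * N y i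
        = ((u:ℚ) - 1) * N x0 i := by
      intro i
      rw [← Finset.mul_sum]
      by_cases hx : x0 ∈ L.get i
      · have hcard : (L.get i).card = u :=
          huniform _ (by rw [← hL]; exact Multiset.mem_coe.mpr (List.get_mem L i))
        have hsum : ∑ y ∈ univ.erase x0, N y i = (u:ℚ) - 1 := by
          simp only [hN]
          rw [Finset.sum_ite_mem]
          rw [show univ.erase x0 ∩ L.get i = (L.get i).erase x0 from by
            ext z; simp [Finset.mem_erase, and_comm]]
          rw [Finset.sum_const, Finset.card_erase_of_mem hx, hcard,
            nsmul_eq_mul, Nat.cast_sub hu1, Nat.cast_one, mul_one]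
        rw [hsum]
        simp only [hN]
        rw [if_pos hx, mul_one, one_mul]
      · simp only [hN]
        rw [if_neg hx, zero_mul, mul_zero]
    rw [Finset.sum_congr rfl fun i _ => h2 i, ← Finset.mul_sum, hrow x0]
  -- lam < r
  have hlr : (lam : ℚ) < r := by
    by_contra h
    push_neg at h
    have hur : ((u:ℚ) - 1) * r < ((Fintype.card V : ℚ) - 1) * r := by
      apply mul_lt_mul_of_pos_right
      · have : (u:ℚ) < Fintype.card V := by exact_mod_cast hincomplete
        linarith
      · exact_mod_cast hr
    have h2 : ((Fintype.card V : ℚ) - 1) * r ≤ ((Fintype.card V : ℚ) - 1) * lam := by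
      apply mul_le_mul_of_nonneg_left h
      have : (1:ℚ) ≤ Fintype.card V := by exact_mod_cast hv0
      linarith
    linarith [hcount]
  -- linear independence of the rows of the incidence matrix
  have hli : LinearIndependent ℚ N := by
    rw [Fintype.linearIndependent_iff]
    intro c hc x
    have h0 : ∀ i, ∑ z, c z * N z i = 0 := by
      intro i
      have := congrFun hc i
      simpa [Finset.sum_apply] using this
    have expand : ∑ z, ∑ w, c z * c w * (∑ i, N z i * N w i) = 0 := by
      have e1 : ∑ i : Fin L.length, (∑ z, c z * N z i) * (∑ w, c w * N w i)
          = ∑ z, ∑ w, c z * c w * (∑ i, N z i * N w i) := by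
        simp_rw [Finset.sum_mul_sum]
        rw [Finset.sum_comm]
        refine Finset.sum_congr rfl fun z _ => ?_
        rw [Finset.sum_comm]
        refine Finset.sum_congr rfl fun w _ => ?_
        rw [Finset.mul_sum]
        exact Finset.sum_congr rfl fun i _ => by ring
      rw [← e1]
      simp [h0]
    have split : ∑ z, ∑ w, c z * c w * (∑ i, N z i * N w i)
        = ((r:ℚ) - lam) * (∑ z, (c z)^2) + (lam:ℚ) * (∑ z, c z)^2 := by
      have inner : ∀ z : V, ∑ w, c z * c w * (∑ i, N z i * N w i)
          = ((r:ℚ) - lam) * (c z)^2 + lam * (c z * ∑ w, c w) := by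
        intro z
        rw [← Finset.add_sum_erase univ _ (mem_univ z), hdiag z,
          Finset.sum_congr rfl (fun w hw => by
            rw [hoff z w (Ne.symm (Finset.ne_of_mem_erase hw))])]
        have he : ∑ w ∈ univ.erase z, c z * c w * (lam:ℚ)
            = c z * ((∑ w, c w) - c z) * lam := by
          rw [← Finset.sum_erase_eq_sub (mem_univ z), Finset.mul_sum, Finset.sum_mul]
        rw [he]
        ring
      rw [Finset.sum_congr rfl fun z _ => inner z, Finset.sum_add_distrib,
        ← Finset.mul_sum, ← Finset.mul_sum, ← Finset.sum_mul]
      ring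
    rw [split] at expand
    have hS : ∑ z, (c z)^2 = 0 := by
      have hSnn : 0 ≤ ∑ z, (c z)^2 := Finset.sum_nonneg fun z _ => sq_nonneg _
      have hlamnn : (0:ℚ) ≤ lam := Nat.cast_nonneg lam
      nlinarith [sq_nonneg (∑ z, c z)]
    have hx0 := (Finset.sum_eq_zero_iff_of_nonneg (fun z _ => sq_nonneg (c z))).mp hS x
      (mem_univ x)
    exact pow_eq_zero_iff (by norm_num) |>.mp hx0
  have hfin := hli.fintype_card_le_finrank
  rwa [Module.finrank_fin_fun, hLdef, Multiset.length_toList] at hfin
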